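/- Consider an ABPG sequence with g ≡ 0 (see context) converging to a point x̃ with ∇f(x̃) = 0, and assume f satisfies the KL inequality at x̃ with exponent θ = 0: there exist c > 0, ε > 0, η > 0 such that c‖∇f(x)‖ ≥ 1 for all x with ‖x − x̃‖ < ε and f(x̃) < f(x) < f(x̃) + η. Then the sequence {x^k} converges to x̃ in a finite number of steps: there exists K such that x^k = x̃ for all k ≥ K. -/

import Mathlib

open scoped RealInnerProductSpace NNReal

/-- Hessian–vector product `∇²φ(x) d`. -/
noncomputable def hessApply {n : ℕ} (φ : EuclideanSpace ℝ (Fin n) → ℝ)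
    (x d : EuclideanSpace ℝ (Fin n)) : EuclideanSpace ℝ (Fin n) :=
  fderiv ℝ (gradient φ) x d


lemma hess_lower_bound {n : ℕ} (φ : EuclideanSpace ℝ (Fin n) → ℝ) (σ : ℝ)
    (hφ : ContDiff ℝ 2 φ)
    (hφsc : ConvexOn ℝ Set.univ (fun y => φ y - σ / 2 * ‖y‖ ^ 2))
    (x d : EuclideanSpace ℝ (Fin n)) :
    σ * ‖d‖ ^ 2 ≤ ⟪fderiv ℝ (gradient φ) x d, d⟫ := by
  have hφd : Differentiable ℝ φ := hφ.differentiable (by norm_num)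
  have hgd : Differentiable ℝ (gradient φ) := by
    have h1 : ContDiff ℝ 1 (fderiv ℝ φ) := hφ.fderiv_right (by norm_num)
    have h2 : ContDiff ℝ 1 (gradient φ) := by
      have := ((InnerProductSpace.toDual ℝ
        (EuclideanSpace ℝ (Fin n))).symm.contDiff (n := 1)).comp h1
      exact this
    exact h2.differentiable (by norm_num)
  set l : ℝ → EuclideanSpace ℝ (Fin n) := fun s => x + s • d with hl_def
  have hl : ∀ s, HasDerivAt l d s := by
    intro s
    exact (((hasDerivAt_id s).smul_const d).const_add x).congr_deriv (one_smul ℝ d)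
  have hl0 : l 0 = x := by simp [hl_def]
  -- derivative of v s = φ (l s) - σ/2 ‖l s‖²
  have hv : ∀ s : ℝ, HasDerivAt (fun s => φ (l s) - σ / 2 * ‖l s‖ ^ 2)
      (⟪gradient φ (l s), d⟫ - σ * ⟪l s, d⟫) s := by
    intro s
    have hu : HasDerivAt (fun s => φ (l s)) ⟪gradient φ (l s), d⟫ s := by
      have hF : HasFDerivAt φ (InnerProductSpace.toDual ℝ _ (gradient φ (l s))) (l s) :=
        (hasGradientAt_iff_hasFDerivAt).mp (hφd (l s)).hasGradientAt
      have h := hF.comp_hasDerivAt s (hl s)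
      rw [InnerProductSpace.toDual_apply_apply] at h
      exact h
    have hq : HasDerivAt (fun s => ‖l s‖ ^ 2) (2 * ⟪l s, d⟫) s := by
      have := HasDerivAt.inner ℝ (hl s) (hl s)
      have h2 : HasDerivAt (fun t => ⟪l t, l t⟫) (⟪l s, d⟫ + ⟪d, l s⟫) s := this
      have h3 : (fun t => ⟪l t, l t⟫) = fun t => ‖l t‖ ^ 2 := by
        funext t; rw [real_inner_self_eq_norm_sq]
      rw [h3] at h2
      convert h2 using 1
      rw [real_inner_comm (l s) d]; ring
    have := hu.sub ((hq.const_mul (σ / 2)))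
    exact this.congr_deriv (by ring)
  have hvconv : ConvexOn ℝ Set.univ (fun s : ℝ => φ (l s) - σ / 2 * ‖l s‖ ^ 2) := by
    have := hφsc.comp_affineMap (AffineMap.lineMap x (x + d))
    have hline : ∀ s : ℝ, (AffineMap.lineMap x (x + d)) s = l s := by
      intro s; simp [AffineMap.lineMap_apply, hl_def]; abel
    have hpre : (AffineMap.lineMap x (x + d) : ℝ →ᵃ[ℝ] EuclideanSpace ℝ (Fin n)) ⁻¹'
        Set.univ = Set.univ := Set.preimage_univ
    rw [hpre] at this
    refine this.congr ?_
    intro s _; simp only [Function.comp_apply]; rw [hline s]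
  -- gradient monotonicity along the line
  have hmono : ∀ t : ℝ, 0 < t →
      σ * t * ‖d‖ ^ 2 ≤ ⟪gradient φ (l t) - gradient φ x, d⟫ := by
    intro t ht
    have h1 := hvconv.le_slope_of_hasDerivAt (Set.mem_univ 0) (Set.mem_univ t) ht (hv 0)
    have h2 := hvconv.slope_le_of_hasDerivAt (Set.mem_univ 0) (Set.mem_univ t) ht (hv t)
    have h3 : ⟪gradient φ (l 0), d⟫ - σ * ⟪l 0, d⟫ ≤ ⟪gradient φ (l t), d⟫ - σ * ⟪l t, d⟫ :=
      le_trans h1 h2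
    rw [hl0] at h3
    have h4 : ⟪l t, d⟫ = ⟪x, d⟫ + t * ‖d‖ ^ 2 := by
      show ⟪x + t • d, d⟫ = _
      simp only [inner_add_left, real_inner_smul_left, real_inner_self_eq_norm_sq]
    rw [inner_sub_left]
    rw [h4] at h3
    linarith
  -- pass to the limit t → 0⁺
  have hD : HasDerivAt (fun s => gradient φ (l s)) (fderiv ℝ (gradient φ) x d) 0 := by
    have h0 := (hgd x).hasFDerivAt
    rw [← hl0] at h0
    have := h0.comp_hasDerivAt 0 (hl 0)
    rw [hl0] at this
    exact this
  have hslope : Filter.Tendsto (slope (fun s => gradient φ (l s)) 0) (nhdsWithin 0 {(0:ℝ)}ᶜ)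
      (nhds (fderiv ℝ (gradient φ) x d)) := hasDerivAt_iff_tendsto_slope.mp hD
  have hslope' : Filter.Tendsto (fun t => ⟪slope (fun s => gradient φ (l s)) 0 t, d⟫)
      (nhdsWithin 0 (Set.Ioi (0:ℝ))) (nhds ⟪fderiv ℝ (gradient φ) x d, d⟫) := by
    have hmono' : nhdsWithin (0:ℝ) (Set.Ioi 0) ≤ nhdsWithin 0 {(0:ℝ)}ᶜ :=
      nhdsWithin_mono _ (fun t ht => ne_of_gt ht)
    exact ((hslope.mono_left hmono').inner tendsto_const_nhds)
  refine ge_of_tendsto hslope' ?_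
  filter_upwards [self_mem_nhdsWithin] with t ht
  have ht' : (0:ℝ) < t := ht
  have := hmono t ht'
  have hsl : slope (fun s => gradient φ (l s)) 0 t = t⁻¹ • (gradient φ (l t) - gradient φ x) := by
    simp [slope, hl0]
  rw [hsl, real_inner_smul_left]
  rw [← mul_le_mul_iff_right₀ ht']
  calc t * (σ * ‖d‖ ^ 2) = σ * t * ‖d‖ ^ 2 := by ring
    _ ≤ ⟪gradient φ (l t) - gradient φ x, d⟫ := this
    _ = t * (t⁻¹ * ⟪gradient φ (l t) - gradient φ x, d⟫) := by
        field_simp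

theorem abpg_finite_convergence_KL_exponent_zero {n : ℕ}
    (φ f : EuclideanSpace ℝ (Fin n) → ℝ) (σ : ℝ) (hσ : 0 < σ)
    (hφ : ContDiff ℝ 2 φ)
    (hφsc : ConvexOn ℝ Set.univ (fun y => φ y - σ / 2 * ‖y‖ ^ 2))
    (hf : ContDiff ℝ 1 f)
    (hbdd : BddBelow (Set.range f))
    (hlevel : ∀ r : ℝ, Bornology.IsBounded {y | f y ≤ r})
    (hlip : ∀ s : Set (EuclideanSpace ℝ (Fin n)), Bornology.IsBounded s →
      ∃ K : ℝ≥0, LipschitzOnWith K (gradient f) s)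
    (lam : ℝ) (hlam : 0 < lam) (α : ℝ) (hα : α ∈ Set.Ioo (0 : ℝ) 1)
    (tmin : ℝ) (htmin : tmin ∈ Set.Ioc (0 : ℝ) 1)
    (x d : ℕ → EuclideanSpace ℝ (Fin n)) (t : ℕ → ℝ)
    (ht : ∀ k, t k ∈ Set.Icc tmin 1)
    (hopt : ∀ k, gradient f (x k) + (1 / lam) • hessApply φ (x k) (d k) = 0)
    (hupd : ∀ k, x (k + 1) = x k + t k • d k)
    (hdec : ∀ k, f (x (k + 1)) ≤
      f (x k) - α * t k / (2 * lam) * ⟪hessApply φ (x k) (d k), d k⟫)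
    (xtilde : EuclideanSpace ℝ (Fin n))
    (hconv : Filter.Tendsto x Filter.atTop (nhds xtilde))
    (hstat : gradient f xtilde = 0)
    (c ε η : ℝ) (hc : 0 < c) (hε : 0 < ε) (hη : 0 < η)
    (hKL : ∀ y : EuclideanSpace ℝ (Fin n), ‖y - xtilde‖ < ε →
      f xtilde < f y → f y < f xtilde + η → 1 ≤ c * ‖gradient f y‖) :
    ∃ K : ℕ, ∀ k, K ≤ k → x k = xtilde := by
  have key : ∀ k, σ * ‖d k‖ ^ 2 ≤ ⟪hessApply φ (x k) (d k), d k⟫ := fun k =>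
    hess_lower_bound φ σ hφ hφsc (x k) (d k)
  have htk : ∀ k, 0 < t k := fun k => lt_of_lt_of_le htmin.1 (ht k).1
  have hcoef : ∀ k, 0 < α * t k / (2 * lam) := fun k => by
    have := htk k; have := hα.1; positivity
  have hmono : ∀ k, f (x (k + 1)) ≤ f (x k) := by
    intro k
    have h1 : 0 ≤ α * t k / (2 * lam) * ⟪hessApply φ (x k) (d k), d k⟫ := by
      apply mul_nonneg (hcoef k).le
      refine le_trans ?_ (key k)
      positivity
    linarith [hdec k]
  have hanti : ∀ j k, j ≤ k → f (x k) ≤ f (x j) := by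
    intro j k hjk
    induction k with
    | zero => simp_all
    | succ m ih =>
      rcases Nat.lt_or_ge j (m + 1) with h | h
      · exact le_trans (hmono m) (ih (by omega))
      · have : j = m + 1 := by omega
        rw [this]
  have hflim : Filter.Tendsto (fun k => f (x k)) Filter.atTop (nhds (f xtilde)) :=
    (hf.continuous.tendsto xtilde).comp hconv
  have hge : ∀ k, f xtilde ≤ f (x k) := fun k =>
    le_of_tendsto hflim (Filter.eventually_atTop.2 ⟨k, fun m hm => hanti k m hm⟩)
  have hgfc : Continuous (gradient f) := by
    have h1 : Continuous (fderiv ℝ f) := hf.continuous_fderiv (by norm_num)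
    exact ((InnerProductSpace.toDual ℝ
      (EuclideanSpace ℝ (Fin n))).symm.continuous).comp h1
  have hgrad_tendsto : Filter.Tendsto (fun k => ‖gradient f (x k)‖) Filter.atTop (nhds 0) := by
    have := ((hgfc.tendsto xtilde).comp hconv)
    rw [hstat] at this
    simpa using this.norm
  -- eventualities
  have e1 : ∀ᶠ k in Filter.atTop, ‖x k - xtilde‖ < ε := by
    have := Metric.tendsto_atTop.mp hconv ε hε
    obtain ⟨N, hN⟩ := this
    exact Filter.eventually_atTop.2 ⟨N, fun k hk => by
      have := hN k hk; rwa [dist_eq_norm] at this⟩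
  have e2 : ∀ᶠ k in Filter.atTop, f (x k) < f xtilde + η :=
    hflim (Iio_mem_nhds (by linarith))
  have e3 : ∀ᶠ k in Filter.atTop, c * ‖gradient f (x k)‖ < 1 := by
    have h1 : ∀ᶠ k in Filter.atTop, ‖gradient f (x k)‖ < 1 / c :=
      hgrad_tendsto (Iio_mem_nhds (by positivity))
    filter_upwards [h1] with k hk
    rw [mul_comm]
    exact (lt_div_iff₀ hc).mp hk
  obtain ⟨K, hK⟩ := Filter.eventually_atTop.1 ((e1.and e2).and e3)
  have hfK : f (x K) = f xtilde := by
    refine le_antisymm ?_ (hge K)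
    by_contra h
    push_neg at h
    obtain ⟨⟨h1, h2⟩, h3⟩ := hK K le_rfl
    have := hKL (x K) h1 h h2
    linarith
  have hfeq : ∀ k, K ≤ k → f (x k) = f xtilde := fun k hk =>
    le_antisymm (hfK ▸ hanti K k hk) (hge k)
  have hdzero : ∀ k, K ≤ k → d k = 0 := by
    intro k hk
    have h1 := hdec k
    rw [hfeq k hk, hfeq (k + 1) (by omega)] at h1
    have h2 : ⟪hessApply φ (x k) (d k), d k⟫ ≤ 0 := by
      nlinarith [hcoef k]
    have h3 : ‖d k‖ ^ 2 ≤ 0 := by nlinarith [key k]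
    have h4 : ‖d k‖ = 0 := by nlinarith [norm_nonneg (d k)]
    exact norm_eq_zero.mp h4
  have hconst : ∀ k, K ≤ k → x k = x K := by
    intro k hk
    induction k, hk using Nat.le_induction with
    | base => rfl
    | succ m hm ih =>
      rw [hupd m, hdzero m hm, smul_zero, add_zero, ih]
  have hxK : x K = xtilde := by
    refine tendsto_nhds_unique ?_ hconv
    exact tendsto_const_nhds.congr' (Filter.eventually_atTop.2
      ⟨K, fun k hk => (hconst k hk).symm⟩)
  exact ⟨K, fun k hk => (hconst k hk).trans hxK⟩
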